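/- Let K be an N×N real symmetric positive definite matrix and let α > 0. Then the matrix K_{Z*}(K, α) := (1/2)((K² + αK)^{1/2} − K) is symmetric positive definite. -/

import Mathlib

open Matrix Classical

/-- The positive semidefinite square root of a matrix (junk value `0` if the matrix is not
positive semidefinite). -/
noncomputable def matSqrt {N : ℕ} (A : Matrix (Fin N) (Fin N) ℝ) : Matrix (Fin N) (Fin N) ℝ :=
  if h : A.PosSemidef then
    h.1.eigenvectorUnitary.1 * diagonal ((↑) ∘ (√·) ∘ h.1.eigenvalues) *
      (star h.1.eigenvectorUnitary : Matrix (Fin N) (Fin N) ℝ)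
  else 0

/-- The optimal distortion covariance matrix
`K_{Z*}(K, α) = (1/2)((K² + αK)^{1/2} − K)`. -/
noncomputable def Kzstar {N : ℕ} (K : Matrix (Fin N) (Fin N) ℝ) (α : ℝ) :
    Matrix (Fin N) (Fin N) ℝ :=
  (1 / 2 : ℝ) • (matSqrt (K ^ 2 + α • K) - K)

lemma posDef_conj_aux {n : ℕ} {A B : Matrix (Fin n) (Fin n) ℝ} (hA : A.PosDef)
    (hB : IsUnit B.det) : (Bᴴ * A * B).PosDef := by
  refine PosDef.of_dotProduct_mulVec_pos (Matrix.isHermitian_conjTranspose_mul_mul B hA.1) fun x hx => ?_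
  have hBx : B *ᵥ x ≠ 0 := by
    intro h
    apply hx
    have := congrArg (fun v => B⁻¹ *ᵥ v) h
    simpa [Matrix.mulVec_mulVec, Matrix.nonsing_inv_mul _ hB] using this
  simpa only [star_mulVec, dotProduct_mulVec, vecMul_vecMul] using hA.dotProduct_mulVec_pos hBx

theorem stmt_3 {N : ℕ} (K : Matrix (Fin N) (Fin N) ℝ) (hK : K.PosDef)
    (α : ℝ) (hα : 0 < α) : (Kzstar K α).PosDef := by
  have hH := hK.1
  set U : Matrix (Fin N) (Fin N) ℝ := (hH.eigenvectorUnitary : Matrix (Fin N) (Fin N) ℝ) with hU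
  set d : Fin N → ℝ := hH.eigenvalues with hd
  have hdpos : ∀ i, 0 < d i := hK.eigenvalues_pos
  have hUU : star U * U = 1 := by
    rw [hU]; exact Unitary.coe_star_mul_self hH.eigenvectorUnitary
  have hUU' : U * star U = 1 := by
    rw [hU]; exact Unitary.coe_mul_star_self hH.eigenvectorUnitary
  have hUdet : IsUnit U.det := by
    apply IsUnit.of_mul_eq_one (star U).det
    rw [← Matrix.det_mul, hUU', Matrix.det_one]
  have hspec : K = U * diagonal d * star U := by
    have := hH.spectral_theorem
    simpa [hU, hd] using this
  -- positive semidefiniteness of K^2 + α•K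
  have hsm : (α • K).PosSemidef := by
    refine PosSemidef.of_dotProduct_mulVec_nonneg ?_ fun x => ?_
    · unfold Matrix.IsHermitian
      rw [conjTranspose_smul, hK.1.eq]
      simp
    · rw [smul_mulVec, dotProduct_smul, smul_eq_mul]
      exact mul_nonneg hα.le (hK.posSemidef.dotProduct_mulVec_nonneg x)
  have hPSD : (K ^ 2 + α • K).PosSemidef := (hK.posSemidef.pow 2).add hsm
  have hmatSqrt : matSqrt (K ^ 2 + α • K) = hPSD.1.cfc Real.sqrt := by
    rw [matSqrt, dif_pos hPSD]; rfl
  -- the candidate square root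
  set S := U * diagonal (fun i => Real.sqrt (d i ^ 2 + α * d i)) * star U with hS
  have hSps : S.PosSemidef :=
    (posSemidef_diagonal_iff.mpr fun i => Real.sqrt_nonneg _).mul_mul_conjTranspose_same U
  have hdiagmul : ∀ (f g : Fin N → ℝ),
      (U * diagonal f * star U) * (U * diagonal g * star U) = U * diagonal (f * g) * star U := by
    intro f g
    calc U * diagonal f * star U * (U * diagonal g * star U)
        = U * diagonal f * (star U * U) * diagonal g * star U := by
          simp only [Matrix.mul_assoc]
      _ = U * diagonal (f * g) * star U := by
          rw [hUU, Matrix.mul_one, Matrix.mul_assoc U, diagonal_mul_diagonal]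
          rfl
  have hSsq : S ^ 2 = K ^ 2 + α • K := by
    rw [hS, pow_two, hdiagmul]
    have hKsq : K ^ 2 = U * diagonal (d * d) * star U := by
      rw [pow_two, hspec, hdiagmul]
    have hKs : α • K = U * diagonal (fun i => α * d i) * star U := by
      rw [hspec, ← Matrix.smul_mul, ← Matrix.mul_smul, ← Matrix.diagonal_smul]
      rfl
    rw [hKsq, hKs, ← Matrix.add_mul, ← Matrix.mul_add, Matrix.diagonal_add]
    have heq : ((fun i => Real.sqrt (d i ^ 2 + α * d i)) * fun i => Real.sqrt (d i ^ 2 + α * d i))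
        = fun i => (d * d) i + α * d i := by
      funext i
      have h1 : 0 ≤ d i ^ 2 + α * d i := by nlinarith [hdpos i]
      simp only [Pi.mul_apply]
      rw [Real.mul_self_sqrt h1, pow_two]
    rw [heq]
  have hSeq : S = hPSD.1.cfc Real.sqrt := by
    open MatrixOrder in
    rw [← hPSD.1.cfc_eq, ← cfcₙ_eq_cfc (f := Real.sqrt) (a := K ^ 2 + α • K) (hf0 := Real.sqrt_zero), ← CFC.sqrt_eq_real_sqrt _ hPSD.nonneg,
      CFC.sqrt_unique (b := S) (by rw [← pow_two]; exact hSsq) hSps.nonneg]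
  -- rewrite Kzstar
  have hKz : Kzstar K α =
      U * diagonal (fun i => (1 / 2 : ℝ) * (Real.sqrt (d i ^ 2 + α * d i) - d i)) * star U := by
    rw [Kzstar, hmatSqrt, ← hSeq, hS]
    conv_lhs => rw [hspec]
    rw [← Matrix.sub_mul, ← Matrix.mul_sub, Matrix.diagonal_sub, ← Matrix.smul_mul,
      ← Matrix.mul_smul, ← Matrix.diagonal_smul]
    rfl
  rw [hKz]
  have hDpos : (diagonal
      (fun i => (1 / 2 : ℝ) * (Real.sqrt (d i ^ 2 + α * d i) - d i))).PosDef := by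
    refine posDef_diagonal_iff.mpr fun i => ?_
    have h1 : d i < Real.sqrt (d i ^ 2 + α * d i) := by
      have h2 : d i ^ 2 < d i ^ 2 + α * d i := by nlinarith [hdpos i]
      have := Real.sqrt_lt_sqrt (by positivity) h2
      rwa [Real.sqrt_sq (hdpos i).le] at this
    nlinarith
  have hdetsU : IsUnit (star U).det := by
    apply IsUnit.of_mul_eq_one U.det
    rw [← Matrix.det_mul, hUU, Matrix.det_one]
  have := posDef_conj_aux (B := star U) hDpos hdetsU
  have hstar : (star U)ᴴ = U := by
    rw [← Matrix.star_eq_conjTranspose, star_star]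
  rwa [hstar] at this
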